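/- For every integer k ≥ 1, the identity q^{k(k+1)/2} F_k(q) = Σ_{i=0}^{k-1} (-1)^i (q^{k-i};q)_i q^{(k-1-i)(k-i)/2} + (-1)^k (q;q)_{k-1} (q;q)_∞ holds in the ring ℤ[[q]] of formal power series, where (q^{k-i};q)_i = ∏_{s=0}^{i-1}(1 - q^{k-i+s}). -/

import Mathlib

/-- The finite q-Pochhammer symbol `(q;q)_m = ∏_{i=1}^{m} (1 - q^i)` as a polynomial in `ℤ[q]`. -/
noncomputable def qPoch (m : ℕ) : Polynomial ℤ :=
  ∏ i ∈ Finset.range m, (1 - Polynomial.X ^ (i + 1))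

/-- The infinite product `(q^a;q)_∞ = ∏_{i ≥ 0} (1 - q^{a+i})` in `ℤ[[q]]` (for `a ≥ 1`),
defined coefficientwise via sufficiently large partial products.
In particular, `pochInf 1 = (q;q)_∞`. -/
noncomputable def pochInf (a : ℕ) : PowerSeries ℤ :=
  PowerSeries.mk fun n =>
    (∏ i ∈ Finset.range (n + 1), (1 - Polynomial.X ^ (a + i)) : Polynomial ℤ).coeff n

/-- The formal power series `F_k(q) = Σ_{j ≥ 0} q^{kj} (q;q)_j ∈ ℤ[[q]]` (for `k ≥ 1`),
defined coefficientwise: the term with index `j` is divisible by `q^{kj}`,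
so only terms with `j ≤ n` contribute to the coefficient of `q^n`. -/
noncomputable def Fser (k : ℕ) : PowerSeries ℤ :=
  PowerSeries.mk fun n =>
    (∑ j ∈ Finset.range (n + 1), Polynomial.X ^ (k * j) * qPoch j : Polynomial ℤ).coeff n

/-- `(q^{k-i};q)_i = ∏_{s=0}^{i-1} (1 - q^{k-i+s})` as a polynomial in `ℤ[q]`. -/
noncomputable def qPochShift (k i : ℕ) : Polynomial ℤ :=
  ∏ s ∈ Finset.range i, (1 - Polynomial.X ^ (k - i + s))


open Polynomial in
noncomputable def Spart (k m : ℕ) : Polynomial ℤ :=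
  ∑ j ∈ Finset.range m, X ^ (k * j) * qPoch j

open Polynomial

lemma qPoch_succ (m : ℕ) : qPoch (m+1) = qPoch m * (1 - X ^ (m+1)) := by
  simp [qPoch, Finset.prod_range_succ]

lemma Spart_succ (k m : ℕ) : Spart k (m+1) = Spart k m + X ^ (k*m) * qPoch m := by
  simp [Spart, Finset.sum_range_succ]

lemma coeff_term_zero {k j d : ℕ} (hk : 1 ≤ k) (hj : d < j) :
    (X ^ (k * j) * qPoch j : Polynomial ℤ).coeff d = 0 := by
  rw [mul_comm, Polynomial.coeff_mul_X_pow']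
  have hle : j ≤ k * j := Nat.le_mul_of_pos_left j hk
  have : ¬ (k * j ≤ d) := by omega
  simp [this]

lemma coeff_Fser (k n : ℕ) :
    (PowerSeries.coeff (R := ℤ) n) (Fser k) = (Spart k (n+1)).coeff n := by
  simp [Fser, Spart]

lemma coeff_Spart (k d M : ℕ) (hk : 1 ≤ k) (hd : d < M) :
    (Spart k M).coeff d = (Spart k (d+1)).coeff d := by
  unfold Spart
  rw [Polynomial.finset_sum_coeff, Polynomial.finset_sum_coeff]
  refine (Finset.sum_subset ?_ ?_).symm
  · intro x hx
    simp only [Finset.mem_range] at *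
    omega
  · intro j hj hnj
    simp only [Finset.mem_range] at hj hnj
    exact coeff_term_zero hk (by omega)

lemma X_pow_dvd_Fser_sub (k M : ℕ) (hk : 1 ≤ k) :
    (PowerSeries.X : PowerSeries ℤ) ^ M ∣
      Fser k - ((Spart k M : Polynomial ℤ) : PowerSeries ℤ) := by
  rw [PowerSeries.X_pow_dvd_iff]
  intro d hd
  rw [map_sub, coeff_Fser, Polynomial.coeff_coe, coeff_Spart k d M hk hd, sub_self]

lemma coeff_qPoch_stable (d : ℕ) : ∀ M, d < M → (qPoch M).coeff d = (qPoch (d+1)).coeff d := by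
  intro M
  induction M with
  | zero => omega
  | succ m ih =>
    intro hm
    rcases Nat.lt_or_ge d m with h | h
    · rw [qPoch_succ, mul_sub, mul_one, Polynomial.coeff_sub,
        Polynomial.coeff_mul_X_pow']
      have : ¬ (m + 1 ≤ d) := by omega
      simp [this, ih h]
    · have : d = m := by omega
      subst this
      rfl

lemma coeff_pochInf (n : ℕ) :
    (PowerSeries.coeff (R := ℤ) n) (pochInf 1) = (qPoch (n+1)).coeff n := by
  simp only [pochInf, PowerSeries.coeff_mk]
  congr 1
  apply Finset.prod_congr rfl
  intro i _
  rw [add_comm 1 i]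

lemma X_pow_dvd_pochInf_sub (M : ℕ) :
    (PowerSeries.X : PowerSeries ℤ) ^ M ∣
      pochInf 1 - ((qPoch M : Polynomial ℤ) : PowerSeries ℤ) := by
  rw [PowerSeries.X_pow_dvd_iff]
  intro d hd
  rw [map_sub, coeff_pochInf, Polynomial.coeff_coe, coeff_qPoch_stable d M hd, sub_self]

lemma ps_eq_of_forall_dvd {f g : PowerSeries ℤ}
    (h : ∀ M, (PowerSeries.X : PowerSeries ℤ) ^ M ∣ f - g) : f = g := by
  rw [← sub_eq_zero]
  ext n
  simpa using PowerSeries.X_pow_dvd_iff.mp (h (n+1)) n (Nat.lt_succ_self n)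

lemma Spart_identity (k M : ℕ) :
    (1 - X^k) * Spart k M + X^(k+1) * Spart (k+1) M
      = 1 - X^(k*M) * qPoch M := by
  induction M with
  | zero => simp [Spart, qPoch]
  | succ m ih =>
    rw [Spart_succ, Spart_succ, qPoch_succ]
    have e1 : k * (m+1) = k*m + k := by ring
    have e2 : (k+1) * m = k*m + m := by ring
    rw [e1, e2]
    linear_combination ih

lemma telescope (M : ℕ) : (X : Polynomial ℤ) * Spart 1 M = 1 - qPoch M := by
  have h := Spart_identity 0 M
  simpa using h

lemma base_case : (PowerSeries.X : PowerSeries ℤ) * Fser 1 = 1 - pochInf 1 := by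
  apply ps_eq_of_forall_dvd
  intro M
  have h1 := X_pow_dvd_Fser_sub 1 M le_rfl
  have h2 := X_pow_dvd_pochInf_sub M
  have hcoe : (PowerSeries.X : PowerSeries ℤ) * ((Spart 1 M : Polynomial ℤ) : PowerSeries ℤ)
      = 1 - ((qPoch M : Polynomial ℤ) : PowerSeries ℤ) := by
    have := congrArg (fun p : Polynomial ℤ => (p : PowerSeries ℤ)) (telescope M)
    push_cast at this
    simpa using this
  have key : PowerSeries.X * Fser 1 - (1 - pochInf 1)
      = PowerSeries.X * (Fser 1 - ((Spart 1 M : Polynomial ℤ) : PowerSeries ℤ))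
        + (pochInf 1 - ((qPoch M : Polynomial ℤ) : PowerSeries ℤ)) := by
    linear_combination hcoe
  rw [key]
  exact dvd_add (h1.mul_left _) h2

lemma Fser_rec (k : ℕ) (hk : 1 ≤ k) :
    (1 - (PowerSeries.X : PowerSeries ℤ)^k) * Fser k
      + PowerSeries.X^(k+1) * Fser (k+1) = 1 := by
  apply ps_eq_of_forall_dvd
  intro M
  have h1 := X_pow_dvd_Fser_sub k M hk
  have h2 := X_pow_dvd_Fser_sub (k+1) M (by omega)
  have hcoe : ((1 : PowerSeries ℤ) - PowerSeries.X^k) * ((Spart k M : Polynomial ℤ) : PowerSeries ℤ)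
      + PowerSeries.X^(k+1) * ((Spart (k+1) M : Polynomial ℤ) : PowerSeries ℤ)
      = 1 - PowerSeries.X^(k*M) * ((qPoch M : Polynomial ℤ) : PowerSeries ℤ) := by
    have := congrArg (fun p : Polynomial ℤ => (p : PowerSeries ℤ)) (Spart_identity k M)
    push_cast at this
    simpa using this
  have key : (1 - (PowerSeries.X : PowerSeries ℤ)^k) * Fser k
      + PowerSeries.X^(k+1) * Fser (k+1) - 1
      = (1 - PowerSeries.X^k) * (Fser k - ((Spart k M : Polynomial ℤ) : PowerSeries ℤ))
        + PowerSeries.X^(k+1) * (Fser (k+1) - ((Spart (k+1) M : Polynomial ℤ) : PowerSeries ℤ))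
        - PowerSeries.X^(k*M) * ((qPoch M : Polynomial ℤ) : PowerSeries ℤ) := by
    linear_combination hcoe
  rw [key]
  refine dvd_sub (dvd_add (h1.mul_left _) (h2.mul_left _)) ?_
  exact Dvd.dvd.mul_right (pow_dvd_pow _ (Nat.le_mul_of_pos_left M hk)) _

lemma qPochShift_succ (k i : ℕ) (h : i ≤ k) :
    qPochShift (k+1) (i+1) = qPochShift k i * (1 - X^k) := by
  unfold qPochShift
  have h1 : k + 1 - (i+1) = k - i := by omega
  rw [Finset.prod_range_succ, h1]
  have h2 : k - i + i = k := by omega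
  rw [h2]

lemma qPoch_eq (k : ℕ) (hk : 1 ≤ k) : qPoch k = qPoch (k-1) * (1 - X^k) := by
  conv_lhs => rw [show k = (k-1)+1 by omega]
  rw [qPoch_succ, show k - 1 + 1 = k by omega]

lemma Apoly (k : ℕ) (hk : 1 ≤ k) :
    (∑ i ∈ Finset.range (k+1),
        (-1 : Polynomial ℤ) ^ i * qPochShift (k+1) i *
          X ^ ((k + 1 - 1 - i) * (k + 1 - i) / 2))
      = X ^ (k*(k+1)/2)
        - (1 - X^k) * ∑ i ∈ Finset.range k,
            (-1 : Polynomial ℤ) ^ i * qPochShift k i * X ^ ((k - 1 - i) * (k - i) / 2) := by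
  rw [Finset.sum_range_succ']
  have h0 : (-1 : Polynomial ℤ)^0 * qPochShift (k+1) 0 * X ^ ((k + 1 - 1 - 0) * (k + 1 - 0) / 2)
      = X ^ (k*(k+1)/2) := by
    simp [qPochShift]
  rw [h0]
  have hterm : ∀ i ∈ Finset.range k,
      (-1 : Polynomial ℤ)^(i+1) * qPochShift (k+1) (i+1) *
          X ^ ((k + 1 - 1 - (i+1)) * (k + 1 - (i+1)) / 2)
        = -((1 - X^k) * ((-1 : Polynomial ℤ)^i * qPochShift k i * X ^ ((k - 1 - i) * (k - i) / 2))) := by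
    intro i hi
    simp only [Finset.mem_range] at hi
    rw [qPochShift_succ k i (by omega)]
    have e2 : k + 1 - 1 - (i+1) = k - 1 - i := by omega
    have e3 : k + 1 - (i+1) = k - i := by omega
    rw [e2, e3]
    ring
  rw [Finset.sum_congr rfl hterm, Finset.sum_neg_distrib, Finset.mul_sum]
  ring

theorem Fser_recurrence (k : ℕ) (hk : 1 ≤ k) :
    (PowerSeries.X : PowerSeries ℤ) ^ (k * (k + 1) / 2) * Fser k =
      ((∑ i ∈ Finset.range k,
          (-1 : Polynomial ℤ) ^ i * qPochShift k i *
            Polynomial.X ^ ((k - 1 - i) * (k - i) / 2) : Polynomial ℤ) : PowerSeries ℤ)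
        + (-1 : PowerSeries ℤ) ^ k * ((qPoch (k - 1) : Polynomial ℤ) : PowerSeries ℤ)
          * pochInf 1 := by
  induction k, hk using Nat.le_induction with
  | base =>
    have hb := base_case
    simp only [Finset.sum_range_one]
    norm_num [qPochShift, qPoch]
    linear_combination hb
  | succ k hk ih =>
    have hrec : PowerSeries.X ^ (k+1) * Fser (k+1)
        = 1 - (1 - (PowerSeries.X : PowerSeries ℤ) ^ k) * Fser k :=
      eq_sub_of_add_eq' (Fser_rec k hk)
    have e1 : (k+1) * (k+1+1) / 2 = k*(k+1)/2 + (k+1) := by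
      have h2 : (k+1)*(k+1+1) = k*(k+1) + 2*(k+1) := by ring
      obtain ⟨c, hc⟩ := Nat.even_mul_succ_self k
      rw [h2, hc]
      omega
    have hA := congrArg (fun p : Polynomial ℤ => (p : PowerSeries ℤ)) (Apoly k hk)
    simp only [Polynomial.coe_sub, Polynomial.coe_mul, Polynomial.coe_pow, Polynomial.coe_one,
      Polynomial.coe_X] at hA
    have hq : ((qPoch (k+1-1) : Polynomial ℤ) : PowerSeries ℤ)
        = ((qPoch (k-1) : Polynomial ℤ) : PowerSeries ℤ) * (1 - (PowerSeries.X : PowerSeries ℤ) ^ k) := by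
      rw [show k+1-1 = k from rfl, qPoch_eq k hk]
      push_cast
      ring
    calc (PowerSeries.X : PowerSeries ℤ) ^ ((k+1)*(k+1+1)/2) * Fser (k+1)
        = PowerSeries.X ^ (k*(k+1)/2) * (PowerSeries.X ^ (k+1) * Fser (k+1)) := by
          rw [e1, pow_add, mul_assoc]
      _ = PowerSeries.X ^ (k*(k+1)/2)
            - (1 - PowerSeries.X ^ k) * (PowerSeries.X ^ (k*(k+1)/2) * Fser k) := by
          rw [hrec]; ring
      _ = _ := by
          rw [ih, hq]
          linear_combination -hA
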